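/- arXiv:1402.3177 — 6 statements merged into one kernel-verified Lean document; each statement's English description precedes it below -/
import Mathlib

section
/- Let Q ⊆ ℝ^n be a cube and v_k : Q → ℂ^d measurable with |v_k(x)| = 1 a.e. for each k. If |(1/|Q|)∫_Q v_k| → 1 as k → ∞, then there exist a unit vector u_0 ∈ ℂ^d, a subsequence (v_{k_j}), and a full-measure subset F ⊆ Q such that v_{k_j}(x) → u_0 for every x ∈ F. -/
open MeasureTheory Filter

/-- The closed axis-parallel cube of lower corner `a` and side `ℓ` in `ℝ^n`. -/
def cube {n : ℕ} (a : Fin n → ℝ) (ℓ : ℝ) : Set (Fin n → ℝ) :=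
  Set.Icc a (a + fun _ => ℓ)

/-- If `v_k` are measurable unit-norm functions on a cube `Q` whose averages have norms
tending to `1`, then some subsequence converges a.e. on `Q` to a fixed unit vector `u₀`. -/
theorem stmt8 {n d : ℕ} (a : Fin n → ℝ) (ℓ : ℝ) (hℓ : 0 < ℓ)
    (Q : Set (Fin n → ℝ)) (hQ : Q = cube a ℓ)
    (v : ℕ → (Fin n → ℝ) → EuclideanSpace ℂ (Fin d))
    (hv : ∀ k, AEStronglyMeasurable (v k) (volume.restrict Q))
    (hnorm : ∀ k, ∀ᵐ x ∂volume.restrict Q, ‖v k x‖ = 1)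
    (hlim : Tendsto (fun k => ‖(volume Q).toReal⁻¹ • ∫ z in Q, v k z‖) atTop (nhds 1)) :
    ∃ (u₀ : EuclideanSpace ℂ (Fin d)) (φ : ℕ → ℕ) (F : Set (Fin n → ℝ)),
      ‖u₀‖ = 1 ∧ StrictMono φ ∧ F ⊆ Q ∧ volume (Q \ F) = 0 ∧
        ∀ x ∈ F, Tendsto (fun j => v (φ j) x) atTop (nhds u₀) := by
  classical

  set μ := volume.restrict Q with hμdef
  have hQm : MeasurableSet Q := by rw [hQ]; exact measurableSet_Icc
  have hQvol : volume Q = ENNReal.ofReal ℓ ^ n := by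
    rw [hQ]
    simp [cube, Real.volume_Icc_pi]
  have hQfin : volume Q ≠ ⊤ := by
    rw [hQvol]; exact (ENNReal.pow_lt_top ENNReal.ofReal_lt_top).ne
  have hQpos : volume Q ≠ 0 := by
    rw [hQvol]
    simp [pow_eq_zero_iff', ENNReal.ofReal_eq_zero, not_le, hℓ]
  haveI : IsFiniteMeasure μ := by
    constructor
    rw [hμdef, Measure.restrict_apply MeasurableSet.univ, Set.univ_inter]
    exact hQfin.lt_top
  set c := (volume Q).toReal with hc
  have hcpos : (0:ℝ) < c := ENNReal.toReal_pos hQpos hQfin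
  have hμuniv : μ Set.univ = volume Q := by
    rw [hμdef, Measure.restrict_apply MeasurableSet.univ, Set.univ_inter]
  have hint : ∀ k, Integrable (v k) μ := fun k =>
    (integrable_const (1:ℝ)).mono' (hv k) ((hnorm k).mono fun x hx => by simp [hx])
  set u : ℕ → EuclideanSpace ℂ (Fin d) := fun k => c⁻¹ • ∫ z in Q, v k z with hu
  have hu1 : ∀ k, u k ∈ Metric.closedBall (0:EuclideanSpace ℂ (Fin d)) 1 := by
    intro k
    rw [Metric.mem_closedBall, dist_zero_right]
    have h1 : ‖∫ z in Q, v k z‖ ≤ ∫ z in Q, ‖v k z‖ := norm_integral_le_integral_norm _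
    have h2 : ∫ z in Q, ‖v k z‖ = c := by
      rw [integral_congr_ae (hnorm k)]
      simp [measureReal_def, hμuniv, hc]
    have h3 : ‖u k‖ = ‖(c⁻¹ : ℝ)‖ * ‖∫ z in Q, v k z‖ := norm_smul _ _
    rw [Real.norm_eq_abs, abs_of_pos (inv_pos.2 hcpos)] at h3
    rw [h3]
    calc c⁻¹ * ‖∫ z in Q, v k z‖ ≤ c⁻¹ * c := by
          apply mul_le_mul_of_nonneg_left _ (inv_pos.2 hcpos).le
          rw [← h2]; exact h1
      _ = 1 := inv_mul_cancel₀ hcpos.ne'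
  obtain ⟨u₀, -, φ₁, hφ₁, hconv⟩ :=
    (isCompact_closedBall (0:EuclideanSpace ℂ (Fin d)) 1).tendsto_subseq hu1
  have hnormconv : Tendsto (fun j => ‖u (φ₁ j)‖) atTop (nhds 1) :=
    hlim.comp hφ₁.tendsto_atTop
  have hu₀ : ‖u₀‖ = 1 :=
    tendsto_nhds_unique ((continuous_norm.tendsto u₀).comp hconv) hnormconv
  -- key integral identity
  have key : ∀ k, ∫ x, ‖v k x - u₀‖^2 ∂μ
      = 2*c - 2*(c * RCLike.re (inner (𝕜 := ℂ) u₀ (u k))) := by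
    intro k
    have hsq : Integrable (fun x => ‖v k x‖^2) μ :=
      (integrable_const (1:ℝ)).congr ((hnorm k).mono fun x hx => by simp [hx])
    have hinner : Integrable (fun x => RCLike.re (inner (𝕜 := ℂ) u₀ (v k x))) μ :=
      ((hint k).const_inner u₀).re
    have expand : ∀ x, ‖v k x - u₀‖^2
        = ‖v k x‖^2 - 2 * RCLike.re (inner (𝕜 := ℂ) u₀ (v k x)) + ‖u₀‖^2 := by
      intro x
      rw [norm_sub_sq (𝕜 := ℂ), inner_re_symm]
    calc ∫ x, ‖v k x - u₀‖^2 ∂μ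
        = ∫ x, (‖v k x‖^2 - 2 * RCLike.re (inner (𝕜 := ℂ) u₀ (v k x)) + ‖u₀‖^2) ∂μ := by
          exact integral_congr_ae (Filter.Eventually.of_forall expand)
      _ = (∫ x, (‖v k x‖^2 - 2 * RCLike.re (inner (𝕜 := ℂ) u₀ (v k x))) ∂μ)
            + ∫ _x, ‖u₀‖^2 ∂μ := by
          exact integral_add (hsq.sub (hinner.const_mul 2)) (integrable_const _)
      _ = (∫ x, ‖v k x‖^2 ∂μ) - 2 * (∫ x, RCLike.re (inner (𝕜 := ℂ) u₀ (v k x)) ∂μ)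
            + ∫ _x, ‖u₀‖^2 ∂μ := by
          rw [integral_sub hsq (hinner.const_mul 2), integral_const_mul]
      _ = 2*c - 2*(c * RCLike.re (inner (𝕜 := ℂ) u₀ (u k))) := by
          have e1 : ∫ x, ‖v k x‖^2 ∂μ = c := by
            have : (fun x => ‖v k x‖^2) =ᵐ[μ] (fun _ => (1:ℝ)) :=
              (hnorm k).mono fun x hx => by simp [hx]
            rw [integral_congr_ae this]
            simp [measureReal_def, hμuniv, hc]
          have e2 : ∫ _x, ‖u₀‖^2 ∂μ = c := by simp [measureReal_def, hu₀, hμuniv, hc]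
          have e3 : ∫ x, RCLike.re (inner (𝕜 := ℂ) u₀ (v k x)) ∂μ
              = c * RCLike.re (inner (𝕜 := ℂ) u₀ (u k)) := by
            rw [integral_re ((hint k).const_inner u₀), integral_inner (hint k)]
            have : (∫ x, v k x ∂μ) = (c:ℝ) • u k := by
              rw [hu]; rw [smul_smul, mul_inv_cancel₀ hcpos.ne', one_smul]
            rw [this, RCLike.real_smul_eq_coe_smul (K := ℂ) c (u k), inner_smul_right,
              RCLike.re_ofReal_mul]
          rw [e1, e2, e3]; ring
  have hA : Tendsto (fun j => ∫ x, ‖v (φ₁ j) x - u₀‖^2 ∂μ) atTop (nhds 0) := by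
    have h1 : Tendsto (fun j => RCLike.re (inner (𝕜 := ℂ) u₀ (u (φ₁ j)))) atTop (nhds 1) := by
      have := (RCLike.continuous_re (K := ℂ)).tendsto (inner (𝕜 := ℂ) u₀ u₀)
      have h2 := this.comp ((tendsto_const_nhds (x := u₀)).inner hconv)
      have : RCLike.re (inner (𝕜 := ℂ) u₀ u₀) = 1 := by
        rw [inner_self_eq_norm_sq, hu₀]; norm_num
      rwa [this] at h2
    have : Tendsto (fun j => 2*c - 2*(c * RCLike.re (inner (𝕜 := ℂ) u₀ (u (φ₁ j)))))
        atTop (nhds (2*c - 2*(c*1))) :=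
      (tendsto_const_nhds.sub ((tendsto_const_nhds.mul h1).const_mul 2))
    simp only [mul_one] at this
    have h0 : (2*c - 2*c : ℝ) = 0 := by ring
    rw [h0] at this
    exact this.congr fun j => (key (φ₁ j)).symm
  -- eLpNorm convergence
  have hmemℒp : ∀ k, MemLp (fun x => v k x - u₀) 2 μ := fun k =>
    (MemLp.of_bound (hv k) 1 ((hnorm k).mono fun x hx => le_of_eq hx)).sub (memLp_const u₀)
  have heLp : ∀ k, eLpNorm (fun x => v k x - u₀) 2 μ
      = ENNReal.ofReal ((∫ x, ‖v k x - u₀‖^2 ∂μ) ^ (2:ℝ)⁻¹) := by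
    intro k
    rw [(hmemℒp k).eLpNorm_eq_integral_rpow_norm two_ne_zero ENNReal.ofNat_ne_top]
    have h2 : ((2:ENNReal)).toReal = (2:ℝ) := by simp
    rw [h2]
    have h3 : (∫ x, ‖v k x - u₀‖ ^ (2:ℝ) ∂μ) = ∫ x, ‖v k x - u₀‖^2 ∂μ :=
      integral_congr_ae (Filter.Eventually.of_forall fun x => by
        show ‖v k x - u₀‖ ^ (2:ℝ) = ‖v k x - u₀‖ ^ 2
        rw [← Real.rpow_natCast ‖v k x - u₀‖ 2]; norm_num)
    rw [h3]
  have heLptendsto : Tendsto (fun j => eLpNorm ((fun x => v (φ₁ j) x) - fun _ => u₀) 2 μ)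
      atTop (nhds 0) := by
    have hcont : Tendsto (fun j => ((∫ x, ‖v (φ₁ j) x - u₀‖^2 ∂μ) ^ (2:ℝ)⁻¹)) atTop (nhds 0) := by
      have : Tendsto (fun t : ℝ => t ^ (2:ℝ)⁻¹) (nhds 0) (nhds 0) := by
        have := (Real.continuousAt_rpow_const 0 (2:ℝ)⁻¹ (Or.inr (by norm_num)))
        simpa [Real.zero_rpow (by norm_num : ((2:ℝ)⁻¹) ≠ 0)] using this.tendsto
      exact this.comp hA
    have := (ENNReal.continuous_ofReal.tendsto 0).comp hcont
    simp only [ENNReal.ofReal_zero] at this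
    refine Tendsto.congr (fun j => ?_) this
    simp only [Function.comp]
    rw [← heLp (φ₁ j)]
    rfl
  have hTIM : TendstoInMeasure μ (fun j x => v (φ₁ j) x) atTop (fun _ => u₀) :=
    tendstoInMeasure_of_tendsto_eLpNorm (p := 2) two_ne_zero
      (fun j => hv (φ₁ j)) aestronglyMeasurable_const heLptendsto
  obtain ⟨ns, hns, hae⟩ := hTIM.exists_seq_tendsto_ae
  set S : Set (Fin n → ℝ) := {x | Tendsto (fun i => v (φ₁ (ns i)) x) atTop (nhds u₀)} with hS
  refine ⟨u₀, φ₁ ∘ ns, Q ∩ S, hu₀, hφ₁.comp hns, Set.inter_subset_left, ?_, fun x hx => hx.2⟩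
  have hnull : μ Sᶜ = 0 := hae
  have : Q \ (Q ∩ S) ⊆ Sᶜ ∩ Q := by
    intro x hx
    exact ⟨fun hxS => hx.2 ⟨hx.1, hxS⟩, hx.1⟩
  refine measure_mono_null this ?_
  rw [← Measure.restrict_apply' hQm]
  exact hnull
end

section
/- Let S_1, …, S_N be nontrivial linear subspaces of ℂ^d with ∩_{j=1}^N S_j = {0}. Then there exists δ > 0 such that for every j and every v ∈ S_j there exists k ≠ j with |(v,w)| ≤ (1−δ)|v||w| for all w ∈ S_k. -/
open Finset

-- per-j lemma
theorem aux9 {d N : ℕ} (S : Fin N → Submodule ℂ (EuclideanSpace ℂ (Fin d)))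
    (hne : ∀ j, S j ≠ ⊥) (hint : (⨅ j, S j) = ⊥) (hN : Nontrivial (Fin N)) (j : Fin N) :
    ∃ δ : ℝ, 0 < δ ∧ δ ≤ 1 ∧ ∀ v ∈ S j, ‖v‖ = 1 → ∃ k, k ≠ j ∧
      ‖(Submodule.orthogonalProjection (S k) v : EuclideanSpace ℂ (Fin d))‖ ≤ 1 - δ := by
  classical
  set E := EuclideanSpace ℂ (Fin d)
  set F : Finset (Fin N) := univ.filter (· ≠ j) with hFdef
  have hF : F.Nonempty := by
    obtain ⟨k, hk⟩ := exists_ne j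
    exact ⟨k, by simp [hFdef, hk]⟩
  set f : E → ℝ := fun v => F.inf' hF (fun k => ‖(Submodule.orthogonalProjection (S k) v : E)‖) with hfdef
  have hfcont : Continuous f := by
    apply Continuous.finset_inf'_apply hF
    intro k _
    exact continuous_norm.comp ((continuous_subtype_val).comp (Submodule.orthogonalProjection (S k)).continuous)
  set K : Set E := (S j : Set E) ∩ Metric.sphere 0 1 with hKdef
  have hKcomp : IsCompact K :=
    (isCompact_sphere (0:E) 1).of_isClosed_subset
      (((S j).closed_of_finiteDimensional).inter Metric.isClosed_sphere) Set.inter_subset_right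
  have hKne : K.Nonempty := by
    obtain ⟨x, hx, hx0⟩ := Submodule.exists_mem_ne_zero_of_ne_bot (hne j)
    refine ⟨((‖x‖:ℂ))⁻¹ • x, (S j).smul_mem _ hx, ?_⟩
    have hxn : ‖x‖ ≠ 0 := norm_ne_zero_iff.mpr hx0
    simp [norm_smul, inv_mul_cancel₀ hxn]
  obtain ⟨v0, hv0K, hmax⟩ := hKcomp.exists_isMaxOn hKne hfcont.continuousOn
  have hv0S : v0 ∈ S j := hv0K.1
  have hv0n : ‖v0‖ = 1 := by simpa using hv0K.2
  -- f v0 < 1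
  have hlt : f v0 < 1 := by
    by_contra h
    push_neg at h
    have hmem : ∀ k, v0 ∈ S k := by
      intro k
      by_cases hk : k = j
      · exact hk ▸ hv0S
      have hkF : k ∈ F := by simp [hFdef, hk]
      have hle : f v0 ≤ ‖(Submodule.orthogonalProjection (S k) v0 : E)‖ := Finset.inf'_le _ hkF
      have hP : (1:ℝ) ≤ ‖(Submodule.orthogonalProjection (S k) v0 : E)‖ := le_trans h hle
      -- Pythagoras
      set P : E := (Submodule.orthogonalProjection (S k) v0 : E) with hPdef
      have horth : v0 - P ∈ (S k)ᗮ := Submodule.sub_starProjection_mem_orthogonal v0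
      have hinner : (inner ℂ P (v0 - P) : ℂ) = 0 :=
        Submodule.inner_right_of_mem_orthogonal (Submodule.orthogonalProjection (S k) v0).2 horth
      have hpyth : ‖v0‖ ^ 2 = ‖P‖ ^ 2 + ‖v0 - P‖ ^ 2 := by
        have := norm_add_sq (𝕜 := ℂ) P (v0 - P)
        simp only [add_sub_cancel, hinner, map_zero] at this
        rw [this]
        ring
      have : ‖v0 - P‖ ^ 2 ≤ 0 := by nlinarith [norm_nonneg (v0 - P)]
      have hz : v0 - P = 0 := by
        have := norm_nonneg (v0 - P)
        have hn0 : ‖v0 - P‖ = 0 := by nlinarith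
        exact norm_eq_zero.mp hn0
      have : v0 = P := by rwa [sub_eq_zero] at hz
      rw [this]
      exact (Submodule.orthogonalProjection (S k) v0).2
    have : v0 ∈ (⨅ j, S j) := Submodule.mem_iInf _ |>.mpr hmem
    rw [hint] at this
    simp only [Submodule.mem_bot] at this
    rw [this] at hv0n
    simp at hv0n
  have hf0 : 0 ≤ f v0 := Finset.le_inf' hF _ (fun k _ => norm_nonneg _)
  refine ⟨1 - f v0, by linarith, by linarith, ?_⟩
  intro v hv hvn
  have hvK : v ∈ K := ⟨hv, by simpa using hvn⟩
  obtain ⟨k, hkF, hkeq⟩ := Finset.exists_mem_eq_inf' hF (fun k => ‖(Submodule.orthogonalProjection (S k) v : E)‖)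
  have hkj : k ≠ j := by simpa [hFdef] using hkF
  refine ⟨k, hkj, ?_⟩
  have hle' : ‖(Submodule.orthogonalProjection (S k) v : E)‖ = f v := hkeq.symm
  have : f v ≤ f v0 := hmax hvK
  linarith

/-- If `S₁, …, S_N` are nontrivial subspaces of `ℂ^d` with trivial intersection, then there is
`δ > 0` such that for every `j` and every `v ∈ S_j` there exists `k ≠ j` with
`|(v,w)| ≤ (1-δ)‖v‖‖w‖` for all `w ∈ S_k`. -/
theorem stmt9 {d N : ℕ} (S : Fin N → Submodule ℂ (EuclideanSpace ℂ (Fin d)))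
    (hne : ∀ j, S j ≠ ⊥) (hint : (⨅ j, S j) = ⊥) :
    ∃ δ > (0 : ℝ), ∀ j, ∀ v ∈ S j, ∃ k, k ≠ j ∧ ∀ w ∈ S k,
      ‖(inner ℂ v w : ℂ)‖ ≤ (1 - δ) * ‖v‖ * ‖w‖ := by
  classical
  set E := EuclideanSpace ℂ (Fin d)
  rcases Nat.lt_or_ge N 2 with hN | hN
  · interval_cases N
    · exact ⟨1, one_pos, fun j => j.elim0⟩
    · exfalso
      apply hne 0
      rw [← hint]
      refine le_antisymm (le_iInf fun i => ?_) (iInf_le _ 0)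
      have : i = 0 := Subsingleton.elim i 0
      rw [this]
  have hNT : Nontrivial (Fin N) := Fin.nontrivial_iff_two_le.mpr hN
  choose δ hδpos hδle hδ using aux9 S hne hint hNT
  have hu : (univ : Finset (Fin N)).Nonempty := ⟨⟨0, by omega⟩, mem_univ _⟩
  set Δ : ℝ := univ.inf' hu δ with hΔdef
  have hΔpos : 0 < Δ := (Finset.lt_inf'_iff hu).mpr fun i _ => hδpos i
  have hΔle : ∀ j, Δ ≤ δ j := fun j => Finset.inf'_le _ (mem_univ j)
  refine ⟨Δ, hΔpos, ?_⟩
  intro j v hv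
  by_cases hv0 : v = 0
  · obtain ⟨k, hk⟩ := exists_ne j
    refine ⟨k, hk, ?_⟩
    intro w hw
    subst hv0
    simp only [inner_zero_left, norm_zero, norm_zero, mul_zero, zero_mul]
    positivity
  · have hvn : ‖v‖ ≠ 0 := norm_ne_zero_iff.mpr hv0
    set u : E := ((‖v‖:ℂ))⁻¹ • v with hudef
    have huS : u ∈ S j := (S j).smul_mem _ hv
    have hun : ‖u‖ = 1 := by
      simp [hudef, norm_smul, inv_mul_cancel₀ hvn]
    obtain ⟨k, hkj, hk⟩ := hδ j u huS hun
    refine ⟨k, hkj, ?_⟩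
    intro w hw
    set P : E := (Submodule.orthogonalProjection (S k) u : E) with hPdef
    have horth : u - P ∈ (S k)ᗮ := Submodule.sub_starProjection_mem_orthogonal u
    have hiz : (inner ℂ (u - P) w : ℂ) = 0 :=
      Submodule.inner_left_of_mem_orthogonal hw horth
    have hiuw : (inner ℂ u w : ℂ) = inner ℂ P w := by
      rw [inner_sub_left] at hiz
      linear_combination hiz
    have hvu : v = (‖v‖:ℂ) • u := by
      rw [hudef, smul_smul, mul_inv_cancel₀ (by exact_mod_cast hvn), one_smul]
    have h1 : (inner ℂ v w : ℂ) = (‖v‖:ℂ) * inner ℂ u w := by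
      conv_lhs => rw [hvu]
      rw [inner_smul_left, Complex.conj_ofReal]
    have h1' : ‖(inner ℂ v w : ℂ)‖ = ‖v‖ * ‖(inner ℂ u w : ℂ)‖ := by
      rw [h1, norm_mul, Complex.norm_real, Real.norm_eq_abs, abs_of_nonneg (norm_nonneg v)]
    rw [h1', hiuw]
    have h2 : ‖(inner ℂ P w : ℂ)‖ ≤ ‖P‖ * ‖w‖ := norm_inner_le_norm P w
    have h3 : ‖P‖ ≤ 1 - δ j := hk
    have h4 : 1 - δ j ≤ 1 - Δ := by linarith [hΔle j]
    have hw0 : (0:ℝ) ≤ ‖w‖ := norm_nonneg w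
    calc ‖v‖ * ‖(inner ℂ P w : ℂ)‖ ≤ ‖v‖ * (‖P‖ * ‖w‖) := by
          apply mul_le_mul_of_nonneg_left h2 (norm_nonneg v)
      _ ≤ ‖v‖ * ((1 - Δ) * ‖w‖) := by
          apply mul_le_mul_of_nonneg_left _ (norm_nonneg v)
          apply mul_le_mul_of_nonneg_right _ hw0
          linarith
      _ = (1 - Δ) * ‖v‖ * ‖w‖ := by ring
end

section
/- Let Q ⊆ ℝ^n be a cube partitioned (up to null sets) into measurable sets A_1, …, A_N with |A_j| ≥ η|Q| for all j, where η > 0. Let S : Q → {subspaces of ℂ^d} with S ≡ S_j on A_j for fixed nontrivial subspaces S_j, and let δ > 0 be such that for every j and every unit v ∈ S_j there is k ≠ j with |(v,w)| ≤ (1−δ) for all unit w ∈ S_k. Then for every measurable u : Q → ℂ^d with |u(x)| = 1 and u(x) ∈ S(x) a.e., one has |∫_Q u|² ≤ (1 − δη)|Q|². -/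
open MeasureTheory
open scoped ComplexInnerProductSpace

/-- Quantitative lower bound on the oscillation: if a cube `Q` is partitioned (up to null sets)
into sets `A_j` of measure `≥ η|Q|`, on each of which a subspace field `S` is constantly equal
to a subspace `S_j`, and the subspaces satisfy the quantitative transversality condition with
constant `δ`, then every unit section `u` of `S` satisfies `‖∫_Q u‖² ≤ (1 - δη)|Q|²`. -/
theorem stmt10 {n d N : ℕ} (a : Fin n → ℝ) (ℓ : ℝ) (hℓ : 0 < ℓ)
    (Q : Set (Fin n → ℝ)) (hQ : Q = cube a ℓ)
    (A : Fin N → Set (Fin n → ℝ)) (hAQ : ∀ j, A j ⊆ Q)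
    (hAm : ∀ j, MeasurableSet (A j))
    (hdisj : ∀ j k, j ≠ k → volume (A j ∩ A k) = 0)
    (hcover : volume (Q \ ⋃ j, A j) = 0)
    (η : ℝ) (hη : 0 < η)
    (hAsize : ∀ j, η * (volume Q).toReal ≤ (volume (A j)).toReal)
    (S : Fin N → Submodule ℂ (EuclideanSpace ℂ (Fin d)))
    (hSne : ∀ j, S j ≠ ⊥)
    (δ : ℝ) (hδ : 0 < δ)
    (hang : ∀ j, ∀ v ∈ S j, ‖v‖ = 1 → ∃ k, k ≠ j ∧ ∀ w ∈ S k, ‖w‖ = 1 →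
      ‖(inner ℂ v w : ℂ)‖ ≤ 1 - δ)
    (u : (Fin n → ℝ) → EuclideanSpace ℂ (Fin d))
    (hu : AEStronglyMeasurable u (volume.restrict Q))
    (hunorm : ∀ᵐ x ∂volume.restrict Q, ‖u x‖ = 1)
    (husec : ∀ j, ∀ᵐ x ∂volume.restrict (A j), u x ∈ S j) :
    ‖∫ x in Q, u x‖ ^ 2 ≤ (1 - δ * η) * (volume Q).toReal ^ 2 := by
  have hQm : MeasurableSet Q := by rw [hQ]; exact measurableSet_Icc
  have hQc : IsCompact Q := by rw [hQ]; exact isCompact_Icc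
  have hQfin : volume Q < ⊤ := hQc.measure_lt_top
  have hQfin' : volume Q ≠ ⊤ := hQfin.ne
  -- integrability of u on Q
  have hfinres : ∀ s : Set (Fin n → ℝ), s ⊆ Q → IsFiniteMeasure (volume.restrict s) :=
    by
    intro s hs
    constructor
    rw [Measure.restrict_apply_univ]
    exact lt_of_le_of_lt (measure_mono hs) hQfin
  have huint : IntegrableOn u Q := by
    refine ⟨hu, ?_⟩
    have : IsFiniteMeasure (volume.restrict Q) := by
      constructor; rw [Measure.restrict_apply_univ]; exact hQfin
    exact HasFiniteIntegral.of_bounded (C := 1) (hunorm.mono fun x hx => le_of_eq hx)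
  set I : EuclideanSpace ℂ (Fin d) := ∫ x in Q, u x with hI
  set M : ℝ := (volume Q).toReal with hM
  have hMpos : 0 ≤ M := ENNReal.toReal_nonneg
  -- key pointwise bound: for a.e. x in Q, re ⟪u x, I⟫ ≤ (1 - δ*η) * M
  have hptwise : ∀ᵐ x ∂volume.restrict Q,
      RCLike.re (⟪u x, I⟫) ≤ (1 - δ * η) * M := by
    have hae1 : ∀ᵐ x ∂volume.restrict Q, x ∈ ⋃ j, A j := by
      rw [ae_restrict_iff' hQm]
      have : volume {x | ¬ (x ∈ Q → x ∈ ⋃ j, A j)} = 0 := by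
        refine measure_mono_null ?_ hcover
        intro x hx
        simp only [Set.mem_setOf_eq] at hx
        rw [Classical.not_imp] at hx
        exact ⟨hx.1, hx.2⟩
      simpa [ae_iff] using this
    have hae2 : ∀ᵐ x ∂volume.restrict Q, ∀ j, x ∈ A j → u x ∈ S j := by
      rw [ae_all_iff]
      intro j
      have h1 : ∀ᵐ x ∂volume, x ∈ A j → u x ∈ S j := (ae_restrict_iff' (hAm j)).mp (husec j)
      exact ae_restrict_of_ae h1
    filter_upwards [hae1, hae2, hunorm] with x hx1 hx2 hx3
    obtain ⟨_, ⟨j, rfl⟩, hxj⟩ := hx1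
    obtain ⟨k, hkj, hk⟩ := hang j (u x) (hx2 j hxj) hx3
    -- re ⟪u x, I⟫ = ∫_Q re ⟪u x, u y⟫ dy
    have hint : ∀ s : Set (Fin n → ℝ), s ⊆ Q →
        Integrable (fun y => RCLike.re (⟪u x, u y⟫)) (volume.restrict s) := by
      intro s hs
      exact (((huint.mono_set hs).const_inner (𝕜 := ℂ) (u x)).re)
    have heq : RCLike.re (⟪u x, I⟫) = ∫ y in Q, RCLike.re (⟪u x, u y⟫) := by
      rw [hI, ← integral_inner huint (u x), ← integral_re (huint.const_inner (u x))]
    rw [heq]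
    -- split the integral over A k and Q \ A k
    have hsplit : ∫ y in Q, RCLike.re (⟪u x, u y⟫)
        = (∫ y in A k, RCLike.re (⟪u x, u y⟫))
          + ∫ y in Q \ A k, RCLike.re (⟪u x, u y⟫) := by
      rw [← setIntegral_union disjoint_sdiff_self_right ((hQm.diff (hAm k)))
        (hint _ (hAQ k)) (hint _ Set.diff_subset), Set.union_diff_cancel (hAQ k)]
    rw [hsplit]
    have hunormA : ∀ s : Set (Fin n → ℝ), s ⊆ Q → MeasurableSet s →
        ∀ᵐ y ∂volume.restrict s, ‖u y‖ = 1 ∧ (y ∈ A k → u y ∈ S k) := by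
      intro s hs hsm
      have h1 : ∀ᵐ y ∂volume.restrict s, ‖u y‖ = 1 :=
        ae_mono (Measure.restrict_mono hs le_rfl) hunorm
      have h2 : ∀ᵐ y ∂volume.restrict s, y ∈ A k → u y ∈ S k :=
        ae_restrict_of_ae ((ae_restrict_iff' (hAm k)).mp (husec k))
      filter_upwards [h1, h2] with y hy1 hy2 using ⟨hy1, hy2⟩
    have hAkvol : (volume (A k)).toReal ≤ M := by
      apply ENNReal.toReal_mono hQfin' (measure_mono (hAQ k))
    have hb1 : (∫ y in A k, RCLike.re (⟪u x, u y⟫)) ≤ (1 - δ) * (volume (A k)).toReal := by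
      haveI := hfinres (A k) (hAQ k)
      calc (∫ y in A k, RCLike.re (⟪u x, u y⟫))
          ≤ ∫ _ in A k, (1 - δ) := by
            refine integral_mono_ae (hint _ (hAQ k)) (integrable_const _) ?_
            filter_upwards [hunormA (A k) (hAQ k) (hAm k), ae_restrict_mem (hAm k)]
              with y hy hymem
            exact le_trans (RCLike.re_le_norm _) (hk (u y) (hy.2 hymem) hy.1)
        _ = (1 - δ) * (volume (A k)).toReal := by
            rw [setIntegral_const, smul_eq_mul, mul_comm]; rfl
    have hb2 : (∫ y in Q \ A k, RCLike.re (⟪u x, u y⟫)) ≤ (volume (Q \ A k)).toReal := by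
      haveI := hfinres (Q \ A k) Set.diff_subset
      calc (∫ y in Q \ A k, RCLike.re (⟪u x, u y⟫))
          ≤ ∫ _ in Q \ A k, (1 : ℝ) := by
            refine integral_mono_ae (hint _ Set.diff_subset) (integrable_const _) ?_
            filter_upwards [hunormA _ Set.diff_subset (hQm.diff (hAm k))] with y hy
            obtain ⟨hy1, -⟩ := hy
            refine le_trans (RCLike.re_le_norm _) ?_
            calc ‖(⟪u x, u y⟫)‖ ≤ ‖u x‖ * ‖u y‖ := norm_inner_le_norm _ _
              _ = 1 := by rw [hx3, hy1, mul_one]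
        _ = (volume (Q \ A k)).toReal := by rw [setIntegral_const, smul_eq_mul, mul_one]; rfl
    have hdiffvol : (volume (Q \ A k)).toReal = M - (volume (A k)).toReal := by
      rw [measure_diff (hAQ k) (hAm k).nullMeasurableSet
        (lt_of_le_of_lt (measure_mono (hAQ k)) hQfin).ne,
        ENNReal.toReal_sub_of_le (measure_mono (hAQ k)) hQfin']
    have hAsz := hAsize k
    nlinarith [hb1, hb2, hdiffvol, hδ.le]
  -- conclude
  have hre : ‖I‖ ^ 2 = ∫ x in Q, RCLike.re (⟪u x, I⟫) := by
    conv_lhs => rw [← inner_self_eq_norm_sq (𝕜 := ℂ) I]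
    conv_lhs => rw [hI]
    rw [← integral_inner huint I, ← integral_re (huint.const_inner I)]
    apply integral_congr_ae
    filter_upwards with y
    rw [← inner_conj_symm (u y) I, RCLike.conj_re, hI]
  rw [hre]
  calc (∫ x in Q, RCLike.re (⟪u x, I⟫)) ≤ ∫ _ in Q, (1 - δ * η) * M := by
        haveI := hfinres Q le_rfl
        refine integral_mono_ae ?_ (integrable_const _) hptwise
        exact (huint.inner_const (𝕜 := ℂ) I).re
    _ = (1 - δ * η) * M ^ 2 := by
        rw [setIntegral_const, smul_eq_mul]; change M * _ = _; ring
end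

section
/- For every n, D ∈ ℕ there exists c > 0 such that: for every non-zero real polynomial p in n variables of degree ≤ D and every cube Q ⊆ ℝ^n, there exists a cube Q' ⊆ Q with side length c·ℓ_Q such that p has no zeros in Q'. -/
open MvPolynomial


lemma mem_cube {n : ℕ} {a x : Fin n → ℝ} {ℓ : ℝ} :
    x ∈ cube a ℓ ↔ ∀ i, a i ≤ x i ∧ x i ≤ a i + ℓ := by
  simp only [cube, Set.mem_Icc, Pi.le_def, Pi.add_apply, forall_and]

lemma cube_mono {n : ℕ} {a : Fin n → ℝ} {ℓ ℓ' : ℝ} (h : ℓ ≤ ℓ') :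
    cube a ℓ ⊆ cube a ℓ' := fun x hx => by
  rw [mem_cube] at hx ⊢
  exact fun i => ⟨(hx i).1, (hx i).2.trans (by linarith)⟩

/-- Exponent multisets of coordinatewise degree at most `D`. -/
noncomputable def Tset (n D : ℕ) : Finset (Fin n →₀ ℕ) :=
  Finset.Iic (Finsupp.equivFunOnFinite.symm fun _ => D)

instance (n D : ℕ) : Nonempty (Tset n D) :=
  ⟨⟨0, Finset.mem_Iic.2 (by intro i; simp)⟩⟩

lemma support_subset_Tset {n D : ℕ} {p : MvPolynomial (Fin n) ℝ} (hp : p.totalDegree ≤ D) :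
    p.support ⊆ Tset n D := by
  intro d hd
  rw [Tset, Finset.mem_Iic]
  intro i
  have h1 : d i ≤ d.sum fun _ e => e := by
    by_cases h : i ∈ d.support
    · exact Finset.single_le_sum (fun j _ => Nat.zero_le _) h
    · simp [Finsupp.notMem_support_iff.1 h]
  have := (MvPolynomial.le_totalDegree hd).trans hp
  simpa using h1.trans this

/-- Evaluation of the polynomial with coefficient vector `v`. -/
noncomputable def Fv {n D : ℕ} (v : Tset n D → ℝ) (x : Fin n → ℝ) : ℝ :=
  ∑ d : Tset n D, v d * ∏ i, x i ^ (d : Fin n →₀ ℕ) i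

/-- The polynomial with coefficient vector `v`. -/
noncomputable def Pv {n D : ℕ} (v : Tset n D → ℝ) : MvPolynomial (Fin n) ℝ :=
  ∑ d : Tset n D, monomial (d : Fin n →₀ ℕ) (v d)

lemma eval_Pv {n D : ℕ} (v : Tset n D → ℝ) (x : Fin n → ℝ) :
    eval x (Pv v) = Fv v x := by
  rw [Pv, map_sum, Fv]
  refine Finset.sum_congr rfl fun d _ => ?_
  rw [eval_monomial, Finsupp.prod_pow]

lemma coeff_Pv {n D : ℕ} (v : Tset n D → ℝ) (d : Tset n D) :
    coeff (d : Fin n →₀ ℕ) (Pv v) = v d := by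
  rw [Pv, coeff_sum]
  rw [Finset.sum_congr rfl (fun e _ => coeff_monomial (d : Fin n →₀ ℕ) _ (v e))]
  simp only [Subtype.coe_inj]
  rw [Finset.sum_ite_eq' Finset.univ d v]
  simp

lemma Fv_ne_zero {n D : ℕ} {v : Tset n D → ℝ} (hv : v ≠ 0) : ∃ x, Fv v x ≠ 0 := by
  by_contra h
  push_neg at h
  apply hv
  have : Pv v = 0 := MvPolynomial.funext fun x => by rw [eval_Pv, h, map_zero]
  funext d
  rw [← coeff_Pv v d, this]
  simp

lemma Fv_smul {n D : ℕ} (r : ℝ) (v : Tset n D → ℝ) (x : Fin n → ℝ) :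
    Fv (r • v) x = r * Fv v x := by
  rw [Fv, Fv, Finset.mul_sum]
  exact Finset.sum_congr rfl fun d _ => by simp [mul_assoc]

lemma Fv_sub {n D : ℕ} (v w : Tset n D → ℝ) (x : Fin n → ℝ) :
    Fv v x - Fv w x = Fv (v - w) x := by
  rw [Fv, Fv, Fv, ← Finset.sum_sub_distrib]
  exact Finset.sum_congr rfl fun d _ => by simp [sub_mul]

lemma abs_Fv_le {n D : ℕ} (v : Tset n D → ℝ) {x : Fin n → ℝ} (hx : x ∈ cube 0 1) :
    |Fv v x| ≤ (Tset n D).card * ‖v‖ := by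
  rw [mem_cube] at hx
  simp only [Pi.zero_apply, zero_add] at hx
  calc |Fv v x| ≤ ∑ d : Tset n D, |v d * ∏ i, x i ^ (d : Fin n →₀ ℕ) i| :=
        Finset.abs_sum_le_sum_abs _ _
    _ ≤ ∑ _d : Tset n D, ‖v‖ := by
        refine Finset.sum_le_sum fun d _ => ?_
        rw [abs_mul]
        have h1 : |∏ i, x i ^ (d : Fin n →₀ ℕ) i| ≤ 1 := by
          rw [Finset.abs_prod]
          refine Finset.prod_le_one (fun i _ => abs_nonneg _) fun i _ => ?_
          rw [abs_pow]
          exact pow_le_one₀ (abs_nonneg _) (abs_le.2 ⟨by linarith [(hx i).1], (hx i).2⟩)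
        calc |v d| * |∏ i, x i ^ (d : Fin n →₀ ℕ) i| ≤ |v d| * 1 :=
              mul_le_mul_of_nonneg_left h1 (abs_nonneg _)
          _ = ‖v d‖ := by rw [mul_one]; rfl
          _ ≤ ‖v‖ := norm_le_pi_norm v d
    _ = (Tset n D).card * ‖v‖ := by
        rw [Finset.sum_const, nsmul_eq_mul]
        congr 1
        simp [Finset.card_univ]

lemma Fv_analytic {n D : ℕ} (v : Tset n D → ℝ) :
    AnalyticOnNhd ℝ (Fv v) Set.univ := by
  have h := AnalyticOnNhd.eval_mvPolynomial (𝕜 := ℝ) (Pv v)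
  exact fun x hx => (h x hx).congr (Filter.Eventually.of_forall fun y => eval_Pv v y)

lemma Fv_continuous {n D : ℕ} (v : Tset n D → ℝ) : Continuous (Fv v) := by
  have h := (Fv_analytic v).continuousOn
  rwa [continuousOn_univ] at h

/-- The open unit cube. -/
def opencube (n : ℕ) : Set (Fin n → ℝ) := Set.pi Set.univ fun _ => Set.Ioo (0:ℝ) 1

lemma opencube_open (n : ℕ) : IsOpen (opencube n) :=
  isOpen_set_pi Set.finite_univ fun _ _ => isOpen_Ioo

lemma opencube_subset (n : ℕ) : opencube n ⊆ cube 0 1 := fun x hx => by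
  rw [mem_cube]
  intro i
  have := hx i (Set.mem_univ i)
  exact ⟨by simpa using this.1.le, by simpa using this.2.le⟩

lemma opencube_mem (n : ℕ) : (fun _ => (1:ℝ)/2) ∈ opencube n := by
  intro i _; constructor <;> norm_num

/-- If `Fv v` is not identically zero, it is nonzero somewhere in the open unit cube. -/
lemma exists_ne_zero_in_open {n D : ℕ} {v : Tset n D → ℝ} (hv : ∃ x, Fv v x ≠ 0) :
    ∃ x₁ ∈ opencube n, Fv v x₁ ≠ 0 := by
  by_contra h
  push_neg at h
  obtain ⟨x, hx⟩ := hv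
  apply hx
  have hev : Fv v =ᶠ[nhds (fun _ => (1:ℝ)/2 : Fin n → ℝ)] 0 := by
    filter_upwards [(opencube_open n).mem_nhds (opencube_mem n)] with y hy
    exact h y hy
  have := (Fv_analytic v).eqOn_zero_of_preconnected_of_eventuallyEq_zero
    isPreconnected_univ (Set.mem_univ _) hev
  exact this (Set.mem_univ x)

/-- The basic per-vector claim. -/
lemma per_vector {n D : ℕ} {v : Tset n D → ℝ} (hv : v ≠ 0) :
    ∃ c ∈ Set.Ioc (0:ℝ) 1, ∃ (av : Fin n → ℝ) (ε : ℝ), 0 < ε ∧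
      cube av c ⊆ cube 0 1 ∧ ∀ x ∈ cube av c, ε < |Fv v x| := by
  obtain ⟨x₁, hx₁, hne⟩ := exists_ne_zero_in_open (Fv_ne_zero hv)
  set ε := |Fv v x₁| / 2 with hε
  have hεpos : 0 < ε := by positivity
  have hopen : IsOpen (opencube n ∩ {x | ε < |Fv v x|}) :=
    (opencube_open n).inter (isOpen_lt continuous_const ((Fv_continuous v).abs))
  have hx₁mem : x₁ ∈ opencube n ∩ {x | ε < |Fv v x|} := ⟨hx₁, by
    simp only [Set.mem_setOf_eq, hε]
    have : 0 < |Fv v x₁| := abs_pos.2 hne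
    linarith⟩
  obtain ⟨r, hr, hball⟩ := Metric.isOpen_iff.1 hopen x₁ hx₁mem
  refine ⟨min r 1, ⟨lt_min hr one_pos, min_le_right _ _⟩,
    (fun i => x₁ i - min r 1 / 2), ε, hεpos, ?_, ?_⟩
  · intro x hx
    have hxball : x ∈ Metric.ball x₁ r := by
      rw [Metric.mem_ball]
      have : dist x x₁ ≤ min r 1 / 2 := by
        rw [dist_pi_le_iff (by positivity)]
        intro i
        rw [Real.dist_eq, abs_le]
        rw [mem_cube] at hx
        have := hx i
        constructor <;> linarith [this.1, this.2]
      have : dist x x₁ ≤ r / 2 := this.trans (by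
        have := min_le_left r 1; linarith)
      linarith
    exact opencube_subset n (hball hxball).1
  · intro x hx
    have hxball : x ∈ Metric.ball x₁ r := by
      rw [Metric.mem_ball]
      have : dist x x₁ ≤ min r 1 / 2 := by
        rw [dist_pi_le_iff (by positivity)]
        intro i
        rw [Real.dist_eq, abs_le]
        rw [mem_cube] at hx
        have := hx i
        constructor <;> linarith [this.1, this.2]
      have : dist x x₁ ≤ r / 2 := this.trans (by
        have := min_le_left r 1; linarith)
      linarith
    exact (hball hxball).2

/-- The main uniform lemma on the unit cube. -/
lemma lemmaL (n D : ℕ) :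
    ∃ c ∈ Set.Ioc (0:ℝ) 1, ∀ v : Tset n D → ℝ, v ≠ 0 →
      ∃ a', cube a' c ⊆ cube 0 1 ∧ ∀ x ∈ cube a' c, Fv v x ≠ 0 := by
  classical
  set N : ℝ := ((Tset n D).card : ℝ) with hN
  have hNpos : (0:ℝ) ≤ N := by positivity
  set S := Metric.sphere (0 : Tset n D → ℝ) 1 with hS
  have hSc : IsCompact S := isCompact_sphere 0 1
  -- choose data for each unit vector
  have key : ∀ v : S, ∃ c ∈ Set.Ioc (0:ℝ) 1, ∃ (av : Fin n → ℝ) (ε : ℝ), 0 < ε ∧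
      cube av c ⊆ cube 0 1 ∧ ∀ x ∈ cube av c, ε < |Fv (v : Tset n D → ℝ) x| := by
    intro v
    have hv : (v : Tset n D → ℝ) ≠ 0 := by
      intro h
      have h1 : ((v : Tset n D → ℝ)) ∈ Metric.sphere (0 : Tset n D → ℝ) 1 := v.2
      rw [h, Metric.mem_sphere, dist_self] at h1
      norm_num at h1
    exact per_vector hv
  choose cc hcc av ε hε hsub hlow using key
  -- open cover of the sphere
  have hcover : S ⊆ ⋃ v : S, Metric.ball (v : Tset n D → ℝ) (ε v / (N + 1)) := by
    intro w hw
    exact Set.mem_iUnion.2 ⟨⟨w, hw⟩, Metric.mem_ball_self (div_pos (hε _) (by positivity))⟩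
  obtain ⟨t, ht⟩ := hSc.elim_finite_subcover _ (fun v => Metric.isOpen_ball) hcover
  -- the uniform constant
  set Tc : Finset ℝ := insert 1 (t.image cc) with hTc
  have hTcne : Tc.Nonempty := ⟨1, Finset.mem_insert_self _ _⟩
  set c₀ : ℝ := Tc.min' hTcne with hc₀
  have hc₀pos : 0 < c₀ := by
    have := Tc.min'_mem hTcne
    rw [← hc₀] at this
    rw [hTc] at this
    rcases Finset.mem_insert.1 this with h | h
    · rw [h]; norm_num
    · obtain ⟨v, _, hv⟩ := Finset.mem_image.1 h
      rw [← hv]; exact (hcc v).1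
  have hc₀le1 : c₀ ≤ 1 := Finset.min'_le _ _ (Finset.mem_insert_self _ _)
  refine ⟨c₀, ⟨hc₀pos, hc₀le1⟩, ?_⟩
  intro v hv
  -- normalize
  set w : Tset n D → ℝ := ‖v‖⁻¹ • v with hw
  have hnv : (0:ℝ) < ‖v‖ := norm_pos_iff.2 hv
  have hwS : w ∈ S := by
    rw [hS, Metric.mem_sphere, dist_zero_right, hw, norm_smul]
    simp [abs_of_pos (inv_pos.2 hnv), inv_mul_cancel₀ hnv.ne']
  obtain ⟨i, hit, hwi⟩ : ∃ i ∈ t, w ∈ Metric.ball ((i : S) : Tset n D → ℝ) (ε i / (N + 1)) := by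
    have := ht hwS
    simpa using this
  have hcile : c₀ ≤ cc i := Finset.min'_le _ _ (by
    rw [hTc]; exact Finset.mem_insert_of_mem (Finset.mem_image_of_mem cc hit))
  refine ⟨av i, (cube_mono hcile).trans (hsub i), ?_⟩
  intro x hx
  have hx' : x ∈ cube (av i) (cc i) := cube_mono hcile hx
  have hx01 : x ∈ cube 0 1 := hsub i hx'
  -- perturbation estimate
  have hdiff : |Fv ((i : S) : Tset n D → ℝ) x - Fv w x| ≤ N * ‖((i : S) : Tset n D → ℝ) - w‖ := by
    rw [Fv_sub]
    exact abs_Fv_le _ hx01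
  have hdist : ‖((i : S) : Tset n D → ℝ) - w‖ < ε i / (N + 1) := by
    rw [Metric.mem_ball, dist_eq_norm] at hwi
    rwa [norm_sub_rev]
  have hεi : ε i < |Fv ((i : S) : Tset n D → ℝ) x| := hlow i x hx'
  have hFw : Fv w x ≠ 0 := by
    intro h0
    rw [h0, sub_zero] at hdiff
    have h1 : N * ‖((i : S) : Tset n D → ℝ) - w‖ ≤ N * (ε i / (N + 1)) := by
      apply mul_le_mul_of_nonneg_left hdist.le hNpos
    have h2 : N * (ε i / (N + 1)) < ε i := by
      rw [div_eq_inv_mul, ← mul_assoc]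
      have : N * (N + 1)⁻¹ < 1 := by
        rw [mul_inv_lt_iff₀ (by positivity)]
        linarith
      calc N * (N + 1)⁻¹ * ε i < 1 * ε i := by
            apply mul_lt_mul_of_pos_right this (hε i)
        _ = ε i := one_mul _
    linarith
  intro h0
  apply hFw
  have : Fv v x = ‖v‖ * Fv w x := by
    rw [hw, Fv_smul]
    field_simp
  rw [h0] at this
  have := this.symm
  rcases mul_eq_zero.1 this with h | h
  · exact absurd h hnv.ne'
  · exact h

lemma aeval_eq_eval' {n : ℕ} (y : Fin n → ℝ) (q : MvPolynomial (Fin n) ℝ) :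
    aeval y q = eval y q := by
  rw [aeval_def, ← eval₂_id]; rfl

/-- Degree bound for the affine substitution. -/
lemma totalDegree_subst_le {n D : ℕ} (a : Fin n → ℝ) (ℓ : ℝ)
    (p : MvPolynomial (Fin n) ℝ) (hp : p.totalDegree ≤ D) :
    (bind₁ (fun i => C (a i) + C ℓ * X i) p).totalDegree ≤ D := by
  rw [show (bind₁ (fun i => C (a i) + C ℓ * X i) p : MvPolynomial (Fin n) ℝ)
      = aeval (fun i => C (a i) + C ℓ * X i) p from rfl, aeval_def, eval₂_eq]
  apply MvPolynomial.totalDegree_finsetSum_le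
  intro d hd
  have hdeg1 : ∀ i : Fin n, ((C (a i) + C ℓ * X i : MvPolynomial (Fin n) ℝ)).totalDegree ≤ 1 := by
    intro i
    refine (totalDegree_add _ _).trans (max_le ?_ ?_)
    · rw [totalDegree_C]; norm_num
    · refine (totalDegree_mul _ _).trans ?_
      rw [totalDegree_C, totalDegree_X]
  calc (algebraMap ℝ (MvPolynomial (Fin n) ℝ) (coeff d p) *
          ∏ i ∈ d.support, (C (a i) + C ℓ * X i) ^ d i).totalDegree
      ≤ (algebraMap ℝ (MvPolynomial (Fin n) ℝ) (coeff d p)).totalDegree +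
          (∏ i ∈ d.support, (C (a i) + C ℓ * X i) ^ d i).totalDegree :=
        totalDegree_mul _ _
    _ ≤ 0 + ∑ i ∈ d.support, ((C (a i) + C ℓ * X i : MvPolynomial (Fin n) ℝ) ^ d i).totalDegree := by
        rw [MvPolynomial.algebraMap_eq, totalDegree_C]
        exact add_le_add le_rfl (totalDegree_finset_prod _ _)
    _ ≤ ∑ i ∈ d.support, d i * 1 := by
        rw [zero_add]
        refine Finset.sum_le_sum fun i _ => ?_
        exact (totalDegree_pow _ _).trans (Nat.mul_le_mul_left _ (hdeg1 i))
    _ = d.sum fun _ e => e := by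
        simp [Finsupp.sum]
    _ ≤ D := (MvPolynomial.le_totalDegree hd).trans hp


/-- For every `n, D` there is `c > 0` such that every non-zero real polynomial in `n` variables
of degree `≤ D` has a zero-free sub-cube of relative side `c` inside every cube. -/
theorem stmt11 (n D : ℕ) :
    ∃ c > (0 : ℝ), ∀ p : MvPolynomial (Fin n) ℝ, p ≠ 0 → p.totalDegree ≤ D →
      ∀ (a : Fin n → ℝ) (ℓ : ℝ), 0 < ℓ →
        ∃ a' : Fin n → ℝ, cube a' (c * ℓ) ⊆ cube a ℓ ∧
          ∀ x ∈ cube a' (c * ℓ), MvPolynomial.eval x p ≠ 0 := by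
  obtain ⟨c₀, ⟨hc₀pos, hc₀le1⟩, hL⟩ := lemmaL n D
  refine ⟨c₀, hc₀pos, ?_⟩
  intro p hp hdeg a ℓ hℓ
  set q : MvPolynomial (Fin n) ℝ := bind₁ (fun i => C (a i) + C ℓ * X i) p with hq
  have heval : ∀ y : Fin n → ℝ, eval y q = eval (fun i => a i + ℓ * y i) p := by
    intro y
    rw [hq, ← aeval_eq_eval', aeval_bind₁,
      show (fun i : Fin n => aeval y (C (a i) + C ℓ * X i)) = fun i => a i + ℓ * y i from
        funext fun i => by simp, aeval_eq_eval']
  have hq0 : q ≠ 0 := by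
    intro h0
    apply hp
    apply MvPolynomial.funext
    intro x
    have hy := heval (fun i => (x i - a i) / ℓ)
    rw [h0, map_zero] at hy
    rw [map_zero]
    rw [show (fun i => a i + ℓ * ((x i - a i) / ℓ)) = x by
      funext i; field_simp; ring] at hy
    exact hy.symm
  have hqdeg : q.totalDegree ≤ D := totalDegree_subst_le a ℓ p hdeg
  have hsupp : q.support ⊆ Tset n D := support_subset_Tset hqdeg
  set v : Tset n D → ℝ := fun d => coeff (d : Fin n →₀ ℕ) q with hv
  have hv0 : v ≠ 0 := by
    intro h0
    apply hq0
    apply MvPolynomial.ext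
    intro d
    by_cases hd : d ∈ q.support
    · have : v ⟨d, hsupp hd⟩ = 0 := by rw [h0]; rfl
      rw [hv] at this
      simpa using this
    · simpa using MvPolynomial.notMem_support_iff.1 hd
  have hFv : ∀ y, Fv v y = eval y q := by
    intro y
    rw [Fv, eval_eq']
    rw [Finset.univ_eq_attach, Finset.sum_attach (Tset n D)
      (fun d => coeff d q * ∏ i, y i ^ d i)]
    refine (Finset.sum_subset hsupp ?_).symm
    intro d _ hd
    rw [MvPolynomial.notMem_support_iff.1 hd, zero_mul]
  obtain ⟨a', hsub, hnz⟩ := hL v hv0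
  refine ⟨fun i => a i + ℓ * a' i, ?_, ?_⟩
  · intro x hx
    rw [mem_cube] at hx ⊢
    intro i
    have hi := hx i
    have ha' : (a' : Fin n → ℝ) ∈ cube a' c₀ := by
      rw [mem_cube]; intro j; exact ⟨le_refl _, by linarith⟩
    have hb' : (fun j => a' j + c₀) ∈ cube a' c₀ := by
      rw [mem_cube]; intro j; exact ⟨by linarith, le_refl _⟩
    have h1 := mem_cube.1 (hsub ha') i
    have h2 := mem_cube.1 (hsub hb') i
    simp only [Pi.zero_apply, zero_add] at h1 h2
    constructor
    · nlinarith [h1.1, hi.1]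
    · nlinarith [h2.2, hi.2]
  · intro x hx
    set y : Fin n → ℝ := fun i => (x i - a i) / ℓ with hy
    have hymem : y ∈ cube a' c₀ := by
      rw [mem_cube] at hx ⊢
      intro i
      have hi := hx i
      rw [hy]
      constructor
      · rw [le_div_iff₀ hℓ]; nlinarith
      · rw [div_le_iff₀ hℓ]; nlinarith
    have := hnz y hymem
    rw [hFv, heval] at this
    rw [show (fun i => a i + ℓ * y i) = x by
      funext i; rw [hy]; field_simp; ring] at this
    exact this
end

section
/- For every n, D ∈ ℕ there exists c > 0 such that: for every non-negative real polynomial q in n variables of degree ≤ D and every cube Q ⊆ ℝ^n, there exists a cube Q' ⊆ Q with side length c·ℓ_Q such that sup_{Q'} q ≤ 2 inf_{Q'} q. -/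
open MvPolynomial Set

noncomputable section StmtAux

/-- index finset of monomials of coordinatewise degree ≤ D -/
def pIdx (n D : ℕ) : Finset (Fin n →₀ ℕ) :=
  Finset.Iic (Finsupp.equivFunOnFinite.symm fun _ : Fin n => D)

/-- coefficient space -/
abbrev pE (n D : ℕ) := {m // m ∈ pIdx n D} → ℝ

/-- evaluation of a coefficient vector -/
def pF {n D : ℕ} (v : pE n D) (x : Fin n → ℝ) : ℝ :=
  ∑ m : {m // m ∈ pIdx n D}, v m * ∏ i, x i ^ ((m : Fin n →₀ ℕ) i)

variable {n D : ℕ}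

lemma mem_cube_iff {a x : Fin n → ℝ} {ℓ : ℝ} :
    x ∈ cube a ℓ ↔ ∀ i, a i ≤ x i ∧ x i ≤ a i + ℓ := by
  simp only [cube, Set.mem_Icc, Pi.le_def, Pi.add_apply, ← forall_and]

lemma support_subset_pIdx {q : MvPolynomial (Fin n) ℝ} (h : q.totalDegree ≤ D) :
    q.support ⊆ pIdx n D := by
  intro m hm
  simp only [pIdx, Finset.mem_Iic]
  rw [Finsupp.le_def]
  intro i
  have h1 : m i ≤ m.sum fun _ e => e := by
    by_cases h0 : m i = 0
    · simp [h0]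
    · calc m i ≤ ∑ j ∈ m.support, m j :=
          Finset.single_le_sum (fun _ _ => Nat.zero_le _) (Finsupp.mem_support_iff.2 h0)
        _ = m.sum fun _ e => e := rfl
  have h2 : (m.sum fun _ e => e) ≤ q.totalDegree := le_totalDegree hm
  simpa using h1.trans (h2.trans h)

lemma pF_eval {q : MvPolynomial (Fin n) ℝ} (h : q.totalDegree ≤ D) (x : Fin n → ℝ) :
    MvPolynomial.eval x q = pF (D := D) (fun m => q.coeff m.1) x := by
  rw [MvPolynomial.eval_eq', pF]
  rw [Finset.sum_coe_sort (pIdx n D) (fun m => q.coeff m * ∏ i, x i ^ m i)]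
  exact Finset.sum_subset (support_subset_pIdx h)
    (fun m _ hm => by simp [MvPolynomial.notMem_support_iff.1 hm])

lemma pF_continuous : Continuous fun p : pE n D × (Fin n → ℝ) => pF p.1 p.2 := by
  unfold pF
  apply continuous_finset_sum
  intro m _
  exact ((continuous_apply m).comp continuous_fst).mul
    (continuous_finset_prod _ fun i _ =>
      (((continuous_apply i).comp continuous_snd).pow _))

lemma pF_continuous_right (v : pE n D) : Continuous fun x : Fin n → ℝ => pF v x :=
  pF_continuous.comp (Continuous.prodMk_right v)

lemma pF_continuous_left (x : Fin n → ℝ) : Continuous fun v : pE n D => pF v x :=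
  pF_continuous.comp (Continuous.prodMk_left x)

lemma pF_smul (r : ℝ) (v : pE n D) (x : Fin n → ℝ) : pF (r • v) x = r * pF v x := by
  simp [pF, Finset.mul_sum, mul_assoc]

lemma pF_zero (x : Fin n → ℝ) : pF (0 : pE n D) x = 0 := by simp [pF]

/-- the polynomial with coefficient vector `v` -/
def pPoly (v : pE n D) : MvPolynomial (Fin n) ℝ :=
  ∑ m : {m // m ∈ pIdx n D}, monomial m.1 (v m)

lemma eval_pPoly (v : pE n D) (x : Fin n → ℝ) : MvPolynomial.eval x (pPoly v) = pF v x := by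
  simp only [pPoly, map_sum, MvPolynomial.eval_monomial, pF]
  refine Finset.sum_congr rfl fun m _ => ?_
  rw [Finsupp.prod_pow]

lemma coeff_pPoly (v : pE n D) (m : {m // m ∈ pIdx n D}) : (pPoly v).coeff m.1 = v m := by
  simp only [pPoly, MvPolynomial.coeff_sum, MvPolynomial.coeff_monomial]
  rw [Finset.sum_eq_single m]
  · simp
  · intro b _ hb
    rw [if_neg (fun h => hb (Subtype.ext h))]
  · simp

lemma pF_analytic (v : pE n D) : AnalyticOnNhd ℝ (pF v) Set.univ := by
  unfold pF
  apply Finset.analyticOnNhd_fun_sum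
  intro m _
  apply AnalyticOnNhd.mul analyticOnNhd_const
  apply Finset.analyticOnNhd_fun_prod
  intro i _
  exact ((ContinuousLinearMap.proj i : (Fin n → ℝ) →L[ℝ] ℝ).analyticOnNhd _).pow _

lemma pF_zero_on_cube {v : pE n D} (h : ∀ x ∈ cube (0 : Fin n → ℝ) 1, pF v x = 0) :
    v = 0 := by
  have hmem : cube (0 : Fin n → ℝ) 1 ∈ nhds (fun _ => (1:ℝ)/2 : Fin n → ℝ) := by
    rw [Metric.mem_nhds_iff]
    refine ⟨1/2, by norm_num, ?_⟩
    intro y hy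
    rw [Metric.mem_ball] at hy
    rw [mem_cube_iff]
    intro i
    have h1 : dist (y i) ((fun _ => (1:ℝ)/2) i) ≤ dist y (fun _ => (1:ℝ)/2) :=
      dist_le_pi_dist y (fun _ => (1:ℝ)/2) i
    simp only [Real.dist_eq] at h1
    have h2 : |y i - 1/2| < 1/2 := lt_of_le_of_lt h1 hy
    rw [abs_lt] at h2
    constructor <;> [skip; skip] <;> simp <;> linarith
  have hev : pF v =ᶠ[nhds (fun _ => (1:ℝ)/2 : Fin n → ℝ)] 0 :=
    Filter.eventuallyEq_of_mem hmem (fun x hx => h x hx)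
  have hzero : ∀ x, pF v x = 0 := fun x =>
    (pF_analytic v).eqOn_zero_of_preconnected_of_eventuallyEq_zero isPreconnected_univ
      (Set.mem_univ _) hev (Set.mem_univ x)
  have hpoly : pPoly v = 0 := by
    apply MvPolynomial.funext
    intro x
    rw [eval_pPoly, hzero, map_zero]
  funext m
  rw [← coeff_pPoly v m, hpoly]
  simp

/-- Key compactness lemma on the unit cube. -/
lemma key (n D : ℕ) :
    ∃ c : ℝ, 0 < c ∧ c ≤ 1 ∧ ∀ v : pE n D, (∀ x, 0 ≤ pF v x) → v ≠ 0 →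
      ∃ b : Fin n → ℝ, cube b c ⊆ cube (0 : Fin n → ℝ) 1 ∧
        ∀ x ∈ cube b c, ∀ y ∈ cube b c, pF v x ≤ 2 * pF v y := by
  classical
  set K : Set (pE n D) := {v | ‖v‖ = 1} ∩ {v | ∀ x, 0 ≤ pF v x} with hKdef
  have h2 : IsClosed {v : pE n D | ∀ x, 0 ≤ pF v x} := by
    have : {v : pE n D | ∀ x, 0 ≤ pF v x} = ⋂ x, {v | 0 ≤ pF v x} := by
      ext v; simp
    rw [this]
    exact isClosed_iInter fun x => isClosed_le continuous_const (pF_continuous_left x)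
  have hKcl : IsClosed K := ((isClosed_eq continuous_norm continuous_const)).inter h2
  have hKc : IsCompact K := by
    apply (isCompact_sphere (0 : pE n D) 1).of_isClosed_subset hKcl
    intro v hv
    rw [mem_sphere_zero_iff_norm]
    exact hv.1
  have main : ∀ v ∈ K, ∃ (U : Set (pE n D)) (δ : ℝ) (b : Fin n → ℝ),
      IsOpen U ∧ v ∈ U ∧ 0 < δ ∧ δ ≤ 1/2 ∧ cube b δ ⊆ cube (0 : Fin n → ℝ) 1 ∧
      ∀ w ∈ U, ∀ x ∈ cube b δ, ∀ y ∈ cube b δ, pF w x ≤ 2 * pF w y := by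
    rintro v ⟨hv1, hv0⟩
    simp only [Set.mem_setOf_eq] at hv1 hv0
    have hvne : ∃ x1 ∈ cube (0 : Fin n → ℝ) 1, 0 < pF v x1 := by
      by_contra hcon
      push_neg at hcon
      have hvz : v = 0 := pF_zero_on_cube (fun x hx => le_antisymm (hcon x hx) (hv0 x))
      rw [hvz] at hv1
      simp at hv1
    obtain ⟨x1, hx1, hs⟩ := hvne
    set s := pF v x1 with hsdef
    have hx1' := mem_cube_iff.1 hx1
    have hc : ContinuousAt (fun x => pF v x) x1 := (pF_continuous_right v).continuousAt
    rw [Metric.continuousAt_iff] at hc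
    obtain ⟨δ0, hδ0, hball⟩ := hc (s/4) (by linarith)
    set δ : ℝ := min (δ0/2) (1/2) with hδdef
    have hδpos : 0 < δ := lt_min (by linarith) (by norm_num)
    have hδhalf : δ ≤ 1/2 := min_le_right _ _
    set b : Fin n → ℝ := fun i => min (x1 i) (1 - δ) with hbdef
    have hbmem : ∀ i, x1 i - δ ≤ b i ∧ b i ≤ x1 i ∧ 0 ≤ b i ∧ b i + δ ≤ 1 := by
      intro i
      have h1 := hx1' i
      simp only [Pi.zero_apply, zero_add] at h1
      refine ⟨le_min (by linarith) (by linarith), min_le_left _ _, ?_, ?_⟩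
      · apply le_min (by linarith) (by linarith)
      · have := min_le_right (x1 i) (1 - δ); linarith
    have hcube1 : cube b δ ⊆ cube (0 : Fin n → ℝ) 1 := by
      intro x hx
      rw [mem_cube_iff] at hx ⊢
      intro i
      obtain ⟨ha, hb'⟩ := hx i
      obtain ⟨_, _, h3, h4⟩ := hbmem i
      constructor
      · simpa using h3.trans ha
      · simpa using hb'.trans h4
    have hnear : ∀ x ∈ cube b δ, dist x x1 < δ0 := by
      intro x hx
      have hle : dist x x1 ≤ δ := by
        rw [dist_pi_le_iff hδpos.le]
        intro i
        rw [Real.dist_eq, abs_le]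
        obtain ⟨ha, hb'⟩ := mem_cube_iff.1 hx i
        obtain ⟨h1, h2, _, _⟩ := hbmem i
        constructor <;> linarith
      have : δ ≤ δ0/2 := min_le_left _ _
      linarith
    have hvx : ∀ x ∈ cube b δ, 3*s/4 < pF v x ∧ pF v x < 3*s/2 := by
      intro x hx
      have := hball (hnear x hx)
      rw [Real.dist_eq, abs_lt] at this
      constructor <;> linarith
    set U : Set (pE n D) := {w | ∀ x ∈ cube b δ, pF w x ∈ Set.Ioo (3*s/4) (3*s/2)} with hUdef
    have hUopen : IsOpen U := by
      rw [isOpen_iff_mem_nhds]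
      intro w hw
      have hcomp : IsCompact (cube b δ) := isCompact_Icc
      have hopen : IsOpen {p : pE n D × (Fin n → ℝ) | pF p.1 p.2 ∈ Set.Ioo (3*s/4) (3*s/2)} :=
        (isOpen_Ioo).preimage pF_continuous
      obtain ⟨V, W, hVo, hWo, hsV, hsW, hVW⟩ :=
        generalized_tube_lemma isCompact_singleton hcomp hopen
          (by
            rintro ⟨p, x⟩ ⟨hp, hxm⟩
            rw [Set.mem_singleton_iff] at hp
            subst hp
            exact hw x hxm)
      refine Filter.mem_of_superset (hVo.mem_nhds (hsV rfl)) ?_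
      intro w' hw' x hx
      exact hVW (Set.mk_mem_prod hw' (hsW hx))
    refine ⟨U, δ, b, hUopen, ?_, hδpos, hδhalf, hcube1, ?_⟩
    · intro x hx
      exact ⟨(hvx x hx).1, (hvx x hx).2⟩
    · intro w hw x hx y hy
      obtain ⟨_, hx2⟩ := hw x hx
      obtain ⟨hy1, _⟩ := hw y hy
      linarith
  choose! U δf bf hUopen hUmem hδpos hδhalf hcubesub hUprop using main
  have hcover : K ⊆ ⋃ v ∈ K, U v := fun v hv => Set.mem_biUnion hv (hUmem v hv)
  obtain ⟨T, hTsub, hTfin, hTcov⟩ :=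
    hKc.elim_finite_subcover_image (fun v hv => hUopen v hv) hcover
  obtain ⟨c, hcmem, hcle⟩ :
      ∃ c ∈ insert (1/2 : ℝ) (hTfin.toFinset.image δf),
        ∀ r ∈ insert (1/2 : ℝ) (hTfin.toFinset.image δf), c ≤ r :=
    ⟨_, Finset.min'_mem _ ⟨1/2, Finset.mem_insert_self _ _⟩,
      fun r hr => Finset.min'_le _ _ hr⟩
  have hcpos : 0 < c := by
    rcases Finset.mem_insert.1 hcmem with h | h
    · rw [h]; norm_num
    · obtain ⟨w, hwT, hweq⟩ := Finset.mem_image.1 h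
      rw [← hweq]
      exact hδpos w (hTsub (hTfin.mem_toFinset.1 hwT))
  have hchalf : c ≤ 1/2 := hcle _ (Finset.mem_insert_self _ _)
  refine ⟨c, hcpos, by linarith, ?_⟩
  intro v hv0 hvne
  set u : pE n D := ‖v‖⁻¹ • v with hu
  have hnv : 0 < ‖v‖ := norm_pos_iff.2 hvne
  have huK : u ∈ K := by
    constructor
    · simp only [Set.mem_setOf_eq, hu, norm_smul, norm_inv, norm_norm]
      field_simp
    · intro x
      rw [hu, pF_smul]
      exact mul_nonneg (inv_nonneg.2 hnv.le) (hv0 x)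
  obtain ⟨w, hwT, hwU⟩ : ∃ w ∈ T, u ∈ U w := by
    have := hTcov huK
    simpa using this
  have hcδ : c ≤ δf w :=
    hcle _ (Finset.mem_insert_of_mem (Finset.mem_image.2 ⟨w, hTfin.mem_toFinset.2 hwT, rfl⟩))
  have hsub : cube (bf w) c ⊆ cube (bf w) (δf w) := by
    apply Set.Icc_subset_Icc le_rfl
    intro i
    simp only [Pi.add_apply]
    linarith
  refine ⟨bf w, hsub.trans (hcubesub w (hTsub hwT)), ?_⟩
  intro x hx y hy
  have hprop := hUprop w (hTsub hwT) u hwU x (hsub hx) y (hsub hy)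
  have hvx : pF v x = ‖v‖ * pF u x := by
    rw [hu, pF_smul]
    field_simp
  have hvy : pF v y = ‖v‖ * pF u y := by
    rw [hu, pF_smul]
    field_simp
  rw [hvx, hvy]
  calc ‖v‖ * pF u x ≤ ‖v‖ * (2 * pF u y) := by
        exact mul_le_mul_of_nonneg_left hprop hnv.le
    _ = 2 * (‖v‖ * pF u y) := by ring

lemma td_aeval_le (g : Fin n → MvPolynomial (Fin n) ℝ) (hg : ∀ i, (g i).totalDegree ≤ 1)
    (q : MvPolynomial (Fin n) ℝ) : (aeval g q).totalDegree ≤ q.totalDegree := by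
  conv_lhs => rw [q.as_sum]
  rw [map_sum]
  apply (totalDegree_finset_sum _ _).trans
  apply Finset.sup_le
  intro m hm
  rw [aeval_monomial]
  apply (totalDegree_mul _ _).trans
  have h1 : (algebraMap ℝ (MvPolynomial (Fin n) ℝ) (q.coeff m)).totalDegree = 0 := by
    rw [MvPolynomial.algebraMap_eq, totalDegree_C]
  rw [h1, zero_add]
  have h2 : (m.prod fun i k => g i ^ k).totalDegree ≤ m.sum fun _ e => e := by
    rw [Finsupp.prod]
    apply (totalDegree_finset_prod _ _).trans
    calc ∑ i ∈ m.support, (g i ^ m i).totalDegree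
        ≤ ∑ i ∈ m.support, m i * (g i).totalDegree :=
          Finset.sum_le_sum fun i _ => totalDegree_pow _ _
      _ ≤ ∑ i ∈ m.support, m i * 1 :=
          Finset.sum_le_sum fun i _ => Nat.mul_le_mul_left _ (hg i)
      _ = m.sum fun _ e => e := by simp [Finsupp.sum]
  exact h2.trans (le_totalDegree hm)

lemma eval_aeval_affine (a : Fin n → ℝ) (ℓ : ℝ) (q : MvPolynomial (Fin n) ℝ) (x : Fin n → ℝ) :
    MvPolynomial.eval x (aeval (fun i => C (a i) + C ℓ * X i) q)
      = MvPolynomial.eval (fun i => a i + ℓ * x i) q := by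
  induction q using MvPolynomial.induction_on with
  | C r => simp
  | add p r hp hr => simp only [map_add, hp, hr]
  | mul_X p i hp => simp only [map_mul, hp, aeval_X, eval_add, eval_mul, eval_C, eval_X]

end StmtAux

/-- For every `n, D` there is `c > 0` such that every non-negative real polynomial in `n`
variables of degree `≤ D` satisfies `sup_{Q'} q ≤ 2 inf_{Q'} q` on some sub-cube `Q'` of
relative side `c` inside every cube `Q`. -/
theorem stmt12 (n D : ℕ) :
    ∃ c > (0 : ℝ), ∀ q : MvPolynomial (Fin n) ℝ,
      (∀ x : Fin n → ℝ, 0 ≤ MvPolynomial.eval x q) → q.totalDegree ≤ D →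
      ∀ (a : Fin n → ℝ) (ℓ : ℝ), 0 < ℓ →
        ∃ a' : Fin n → ℝ, cube a' (c * ℓ) ⊆ cube a ℓ ∧
          ∀ x ∈ cube a' (c * ℓ), ∀ y ∈ cube a' (c * ℓ),
            MvPolynomial.eval x q ≤ 2 * MvPolynomial.eval y q := by
  obtain ⟨c, hcpos, hc1, hkey⟩ := key n D
  refine ⟨c, hcpos, ?_⟩
  intro q hq hdeg a ℓ hℓ
  set g : Fin n → MvPolynomial (Fin n) ℝ := fun i => C (a i) + C ℓ * X i with hgdef
  have heval : ∀ x : Fin n → ℝ,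
      MvPolynomial.eval x (aeval g q) = MvPolynomial.eval (fun i => a i + ℓ * x i) q :=
    fun x => eval_aeval_affine a ℓ q x
  set qa := aeval g q with hqa
  have hdeg' : qa.totalDegree ≤ D := by
    refine le_trans (td_aeval_le g ?_ q) hdeg
    intro i
    apply (totalDegree_add _ _).trans
    apply max_le
    · simp [totalDegree_C]
    · exact (totalDegree_mul _ _).trans (by simp [totalDegree_C, totalDegree_X])
  have hqa0 : ∀ x, 0 ≤ MvPolynomial.eval x qa := fun x => by rw [heval]; exact hq _
  set v : pE n D := fun m => qa.coeff m.1 with hv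
  have hFv : ∀ x, MvPolynomial.eval x qa = pF v x := fun x => pF_eval hdeg' x
  set ψ : (Fin n → ℝ) → (Fin n → ℝ) := fun x i => (x i - a i) / ℓ with hψ
  have hψeval : ∀ x, MvPolynomial.eval x q = pF v (ψ x) := by
    intro x
    have harg : (fun i => a i + ℓ * ψ x i) = x := by
      funext i
      simp only [hψ]
      field_simp
      ring
    rw [← hFv, heval, harg]
  by_cases hv0 : v = 0
  · refine ⟨a, ?_, ?_⟩
    · apply Set.Icc_subset_Icc le_rfl
      intro i
      simp only [Pi.add_apply]
      nlinarith
    · intro x hx y hy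
      rw [hψeval x, hψeval y, hv0, pF_zero, pF_zero]
      norm_num
  · obtain ⟨b, hbsub, hbprop⟩ := hkey v (fun x => by rw [← hFv]; exact hqa0 x) hv0
    have hψmem : ∀ x ∈ cube (fun i => a i + ℓ * b i) (c * ℓ), ψ x ∈ cube b c := by
      intro x hx
      rw [mem_cube_iff] at hx ⊢
      intro i
      obtain ⟨h1, h2⟩ := hx i
      constructor
      · rw [le_div_iff₀ hℓ]; nlinarith
      · rw [div_le_iff₀ hℓ]; nlinarith
    refine ⟨(fun i => a i + ℓ * b i), ?_, ?_⟩
    · intro x hx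
      have hb01 := mem_cube_iff.1 (hbsub (hψmem x hx))
      rw [mem_cube_iff]
      intro i
      obtain ⟨h1, h2⟩ := hb01 i
      simp only [Pi.zero_apply, zero_add, hψ] at h1 h2
      rw [le_div_iff₀ hℓ] at h1
      rw [div_le_iff₀ hℓ] at h2
      constructor <;> nlinarith
    · intro x hx y hy
      rw [hψeval x, hψeval y]
      exact hbprop (ψ x) (hψmem x hx) (ψ y) (hψmem y hy)
end

section
/- Let V : ℝ → H_2^{≥0} be given by V(x) = [[x⁴, x⁵],[x⁵, x⁶]]. Then the determinant of ∫_{x−ℓ/2}^{x+ℓ/2} V(y) dy equals (ℓ⁴ x⁸)/12 plus terms of lower degree in x, and its trace equals ℓ x⁶ plus lower-degree terms; consequently, for every ℓ > 0 the minimal eigenvalue of ∫_{x−ℓ/2}^{x+ℓ/2} V(y) dy tends to +∞ as |x| → ∞. -/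
open MeasureTheory Filter

private lemma trace_eq_sum_eig (A : Matrix (Fin 2) (Fin 2) ℝ) (hA : A.IsHermitian) :
    A.trace = hA.eigenvalues 0 + hA.eigenvalues 1 := by
  nth_rewrite 1 [hA.spectral_theorem]
  rw [Unitary.conjStarAlgAut_apply, Matrix.trace_mul_cycle,
    (Matrix.mem_unitaryGroup_iff').mp (Matrix.IsHermitian.eigenvectorUnitary hA).2, one_mul,
    Matrix.trace_diagonal, Fin.sum_univ_two]
  simp

private lemma det_eq_prod_eig (A : Matrix (Fin 2) (Fin 2) ℝ) (hA : A.IsHermitian) :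
    A.det = hA.eigenvalues 0 * hA.eigenvalues 1 := by
  rw [hA.det_eq_prod_eigenvalues, Fin.prod_univ_two]
  simp

/-- For `V(x) = [[x⁴, x⁵], [x⁵, x⁶]]` and `M(x) = ∫_{x-ℓ/2}^{x+ℓ/2} V(y) dy` (entrywise):
`det M(x) = ℓ⁴x⁸/12 +` lower order, `tr M(x) = ℓx⁶ +` lower order, and consequently the
minimal eigenvalue of `M(x)` tends to `+∞` as `|x| → ∞`, for every `ℓ > 0`. -/
theorem stmt15 (ℓ : ℝ) (hℓ : 0 < ℓ)
    (M : ℝ → Matrix (Fin 2) (Fin 2) ℝ)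
    (hM : ∀ x, M x =
      !![∫ y in Set.Icc (x - ℓ / 2) (x + ℓ / 2), y ^ 4,
           ∫ y in Set.Icc (x - ℓ / 2) (x + ℓ / 2), y ^ 5;
         ∫ y in Set.Icc (x - ℓ / 2) (x + ℓ / 2), y ^ 5,
           ∫ y in Set.Icc (x - ℓ / 2) (x + ℓ / 2), y ^ 6])
    (hH : ∀ x, (M x).IsHermitian) :
    (∃ r : Polynomial ℝ, r.degree < 8 ∧
        ∀ x, (M x).det = ℓ ^ 4 * x ^ 8 / 12 + r.eval x) ∧
      (∃ s : Polynomial ℝ, s.degree < 6 ∧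
        ∀ x, (M x).trace = ℓ * x ^ 6 + s.eval x) ∧
      Tendsto (fun x => ⨅ i, (hH x).eigenvalues i) (cocompact ℝ) atTop := by
  have hint : ∀ (x : ℝ) (n : ℕ), (∫ y in Set.Icc (x - ℓ / 2) (x + ℓ / 2), y ^ n)
      = ((x + ℓ / 2) ^ (n + 1) - (x - ℓ / 2) ^ (n + 1)) / (n + 1) := by
    intro x n
    rw [MeasureTheory.integral_Icc_eq_integral_Ioc,
      ← intervalIntegral.integral_of_le (by linarith : x - ℓ / 2 ≤ x + ℓ / 2), integral_pow]
  have hdet : ∀ x : ℝ, (M x).det = ℓ ^ 4 * x ^ 8 / 12 +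
      (ℓ ^ 6 * x ^ 6 / 180 + 5 * ℓ ^ 8 * x ^ 4 / 672 - ℓ ^ 10 * x ^ 2 / 2240
        + ℓ ^ 12 / 35840) := by
    intro x
    rw [hM, Matrix.det_fin_two_of, hint x 4, hint x 5, hint x 6]
    push_cast
    ring
  have htr : ∀ x : ℝ, (M x).trace = ℓ * x ^ 6 +
      ((ℓ + 5 * ℓ ^ 3 / 4) * x ^ 4 + (ℓ ^ 3 / 2 + 3 * ℓ ^ 5 / 16) * x ^ 2
        + (ℓ ^ 5 / 80 + ℓ ^ 7 / 448)) := by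
    intro x
    rw [hM, Matrix.trace_fin_two_of, hint x 4, hint x 6]
    push_cast
    ring
  open Polynomial in
  refine ⟨⟨C (ℓ ^ 6 / 180) * X ^ 6 + C (5 * ℓ ^ 8 / 672) * X ^ 4
      + C (-(ℓ ^ 10) / 2240) * X ^ 2 + C (ℓ ^ 12 / 35840), ?_, fun x => by
        rw [hdet x]
        simp only [Polynomial.eval_add, Polynomial.eval_mul, Polynomial.eval_pow,
          Polynomial.eval_C, Polynomial.eval_X]
        ring⟩,
    ⟨C (ℓ + 5 * ℓ ^ 3 / 4) * X ^ 4 + C (ℓ ^ 3 / 2 + 3 * ℓ ^ 5 / 16) * X ^ 2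
      + C (ℓ ^ 5 / 80 + ℓ ^ 7 / 448), ?_, fun x => by
        rw [htr x]
        simp only [Polynomial.eval_add, Polynomial.eval_mul, Polynomial.eval_pow,
          Polynomial.eval_C, Polynomial.eval_X]
        try ring⟩, ?_⟩
  · exact lt_of_le_of_lt (by compute_degree) (by norm_num)
  · exact lt_of_le_of_lt (by compute_degree) (by norm_num)
  -- the tendsto part
  set P : Polynomial ℝ := C (ℓ ^ 4 / 12) * X ^ 4 + C (ℓ ^ 6 / 180) * X ^ 3
    + C (5 * ℓ ^ 8 / 672) * X ^ 2 + C (-(ℓ ^ 10) / 2240) * X + C (ℓ ^ 12 / 35840) with hP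
  set Q : Polynomial ℝ := C ℓ * X ^ 3 + C (ℓ + 5 * ℓ ^ 3 / 4) * X ^ 2
    + C (ℓ ^ 3 / 2 + 3 * ℓ ^ 5 / 16) * X + C (ℓ ^ 5 / 80 + ℓ ^ 7 / 448) with hQ
  have hPe : ∀ x : ℝ, (M x).det = P.eval (x ^ 2) := by
    intro x; rw [hdet x, hP]; simp; ring
  have hQe : ∀ x : ℝ, (M x).trace = Q.eval (x ^ 2) := by
    intro x; rw [htr x, hQ]; simp; ring
  have hl4 : (ℓ ^ 4 / 12 : ℝ) ≠ 0 := by positivity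
  have hl0 : ℓ ≠ 0 := ne_of_gt hℓ
  have hPdeg : P.degree = 4 := by rw [hP]; compute_degree!
  have hQdeg : Q.degree = 3 := by rw [hQ]; compute_degree!
  have hPnd : P.natDegree = 4 := Polynomial.natDegree_eq_of_degree_eq_some hPdeg
  have hQnd : Q.natDegree = 3 := Polynomial.natDegree_eq_of_degree_eq_some hQdeg
  have hPlc : P.leadingCoeff = ℓ ^ 4 / 12 := by
    rw [Polynomial.leadingCoeff, hPnd, hP]
    simp only [Polynomial.coeff_add, Polynomial.coeff_C_mul, Polynomial.coeff_X_pow,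
      Polynomial.coeff_X, Polynomial.coeff_C]
    norm_num
  have hQlc : Q.leadingCoeff = ℓ := by
    rw [Polynomial.leadingCoeff, hQnd, hQ]
    simp only [Polynomial.coeff_add, Polynomial.coeff_C_mul, Polynomial.coeff_X_pow,
      Polynomial.coeff_X, Polynomial.coeff_C]
    norm_num
  have hQne : Q ≠ 0 := fun h => by simp [h] at hQdeg
  have hPt : Tendsto (fun u => P.eval u) atTop atTop :=
    P.tendsto_atTop_of_leadingCoeff_nonneg (by rw [hPdeg]; norm_num)
      (by rw [hPlc]; positivity)
  have hQt : Tendsto (fun u => Q.eval u) atTop atTop :=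
    Q.tendsto_atTop_of_leadingCoeff_nonneg (by rw [hQdeg]; norm_num)
      (by rw [hQlc]; positivity)
  have hdiv : Tendsto (fun u => P.eval u / Q.eval u) atTop atTop :=
    P.div_tendsto_atTop_of_degree_gt Q (by rw [hPdeg, hQdeg]; norm_num) hQne
      (by rw [hPlc, hQlc]; positivity)
  have hsq : Tendsto (fun x : ℝ => x ^ 2) (cocompact ℝ) atTop := by
    have := (tendsto_pow_atTop (two_ne_zero)).comp
      (tendsto_norm_cocompact_atTop (E := ℝ))
    refine this.congr fun x => ?_
    simp [Real.norm_eq_abs, sq_abs]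
  refine tendsto_atTop_mono' _ ?_ (hdiv.comp hsq)
  have hev : ∀ᶠ u in atTop, 0 < P.eval u ∧ 0 < Q.eval u :=
    (hPt.eventually_gt_atTop 0).and (hQt.eventually_gt_atTop 0)
  filter_upwards [hsq.eventually hev] with x hx
  obtain ⟨hDpos, hTpos⟩ := hx
  have hD : P.eval (x ^ 2) = (hH x).eigenvalues 0 * (hH x).eigenvalues 1 := by
    rw [← hPe x]; exact det_eq_prod_eig _ _
  have hT : Q.eval (x ^ 2) = (hH x).eigenvalues 0 + (hH x).eigenvalues 1 := by
    rw [← hQe x]; exact trace_eq_sum_eig _ _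
  show P.eval (x ^ 2) / Q.eval (x ^ 2) ≤ ⨅ i, (hH x).eigenvalues i
  have key : ∀ j : Fin 2, (hH x).eigenvalues j * Q.eval (x ^ 2)
      = (hH x).eigenvalues j ^ 2 + P.eval (x ^ 2) := by
    intro j
    fin_cases j
    · show (hH x).eigenvalues 0 * Q.eval (x ^ 2) = (hH x).eigenvalues 0 ^ 2 + P.eval (x ^ 2)
      rw [hD, hT]; ring
    · show (hH x).eigenvalues 1 * Q.eval (x ^ 2) = (hH x).eigenvalues 1 ^ 2 + P.eval (x ^ 2)
      rw [hD, hT]; ring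
  have h0 : P.eval (x ^ 2) / Q.eval (x ^ 2) ≤ (hH x).eigenvalues 0 := by
    rw [div_le_iff₀ hTpos]
    have := key 0
    nlinarith [sq_nonneg ((hH x).eigenvalues 0)]
  have h1 : P.eval (x ^ 2) / Q.eval (x ^ 2) ≤ (hH x).eigenvalues 1 := by
    rw [div_le_iff₀ hTpos]
    have := key 1
    nlinarith [sq_nonneg ((hH x).eigenvalues 1)]
  refine le_ciInf fun i => ?_
  fin_cases i
  exacts [h0, h1]
end
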